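/- If g : ℝ^N → ℂ is bounded and continuously differentiable, and each partial derivative ∂_j g vanishes at infinity (belongs to C_0(ℝ^N)), then g has vanishing oscillation: for every x ∈ ℝ^N, the function y ↦ g(y + x) − g(y) vanishes at infinity. -/

import Mathlib

open Filter

/-- If `g : ℝ^N → ℂ` is bounded and C¹, and each partial derivative `∂ⱼ g`
vanishes at infinity, then `g` has vanishing oscillation: for every `x`,
`y ↦ g (y + x) - g y` vanishes at infinity. -/
theorem stmt0 {N : ℕ} (g : EuclideanSpace ℝ (Fin N) → ℂ)
    (hbdd : ∃ C : ℝ, ∀ y, ‖g y‖ ≤ C)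
    (hdiff : ContDiff ℝ 1 g)
    (hderiv : ∀ j : Fin N,
      Tendsto (fun y => fderiv ℝ g y (EuclideanSpace.single j 1))
        (cocompact (EuclideanSpace ℝ (Fin N))) (nhds 0)) :
    ∀ x : EuclideanSpace ℝ (Fin N),
      Tendsto (fun y => g (y + x) - g y)
        (cocompact (EuclideanSpace ℝ (Fin N))) (nhds 0) := by
  intro x
  -- Step 1: `fderiv ℝ g y x → 0` at infinity, by decomposing `x` in the standard basis.
  have hx : Tendsto (fun y => fderiv ℝ g y x)
      (cocompact (EuclideanSpace ℝ (Fin N))) (nhds 0) := by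
    have hrepr : ∀ y, fderiv ℝ g y x
        = ∑ j : Fin N, x j • fderiv ℝ g y (EuclideanSpace.single j 1) := by
      intro y
      conv_lhs => rw [← (EuclideanSpace.basisFun (Fin N) ℝ).sum_repr x]
      simp [EuclideanSpace.basisFun_apply, EuclideanSpace.basisFun_repr]
    simp only [hrepr]
    have := tendsto_finset_sum Finset.univ
      (fun j (_ : j ∈ Finset.univ) => ((hderiv j).const_smul (x j) :))
    simpa using this
  rw [← Metric.cobounded_eq_cocompact] at hx ⊢
  rw [Metric.tendsto_nhds] at hx ⊢
  intro ε hε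
  have h1 := hx (ε / 2) (by positivity)
  rw [(Metric.hasBasis_cobounded_compl_closedBall
    (0 : EuclideanSpace ℝ (Fin N))).eventually_iff] at h1 ⊢
  obtain ⟨R, -, hR⟩ := h1
  refine ⟨R + ‖x‖, trivial, fun y hy => ?_⟩
  simp only [Set.mem_compl_iff, Metric.mem_closedBall, dist_zero_right, not_le] at hy
  -- the segment from `y` to `y + x` stays outside the ball of radius `R`
  have hseg : ∀ t ∈ Set.Icc (0 : ℝ) 1,
      ‖fderiv ℝ g (y + t • x) x‖ ≤ ε / 2 := by
    intro t ht
    have hnorm : R < ‖y + t • x‖ := by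
      have h2 : ‖t • x‖ ≤ ‖x‖ := by
        rw [norm_smul, Real.norm_eq_abs, abs_of_nonneg ht.1]
        nlinarith [norm_nonneg x, ht.2]
      have h3 : ‖y‖ ≤ ‖y + t • x‖ + ‖t • x‖ := by
        have := norm_add_le (y + t • x) (-(t • x))
        simpa using this
      linarith
    have hmem : y + t • x ∈ (Metric.closedBall (0 : EuclideanSpace ℝ (Fin N)) R)ᶜ := by
      simp only [Set.mem_compl_iff, Metric.mem_closedBall, dist_zero_right, not_le]
      exact hnorm
    have := hR hmem
    rw [dist_zero_right] at this
    exact this.le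
  -- mean value inequality along the segment
  have hder : ∀ t ∈ Set.Icc (0 : ℝ) 1,
      HasDerivWithinAt (fun t : ℝ => g (y + t • x))
        (fderiv ℝ g (y + t • x) x) (Set.Icc 0 1) t := by
    intro t _
    have line : HasDerivAt (fun t : ℝ => y + t • x) x t := by
      simpa using ((hasDerivAt_id t).smul_const x).const_add y
    exact (((hdiff.differentiable one_ne_zero (y + t • x)).hasFDerivAt).comp_hasDerivAt
      t line).hasDerivWithinAt
  have key := norm_image_sub_le_of_norm_deriv_le_segment' hder
    (fun t ht => hseg t (Set.Ico_subset_Icc_self ht)) 1 (Set.right_mem_Icc.2 zero_le_one)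
  simp only [one_smul, zero_smul, add_zero] at key
  rw [dist_zero_right]
  calc ‖g (y + x) - g y‖ ≤ ε / 2 * (1 - 0) := key
    _ < ε := by linarith
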